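/- arXiv:1706.05284 — 4 statements merged into one kernel-verified Lean document; each statement's English description precedes it below -/
import Mathlib

section
/- For every positive integer m, the ratio of double factorials satisfies sqrt(2/(π(2m+1))) ≤ (2m-1)!!/(2m)!! ≤ 1/sqrt(2m+1). -/
open Real
open scoped Nat

lemma wallis_W_eq_doubleFactorial (k : ℕ) :
    Real.Wallis.W k =
      ((2 * k)‼ : ℝ) ^ 2 / (((2 * k - 1)‼ : ℝ) * ((2 * k + 1)‼ : ℝ)) := by
  induction k with
  | zero => simp [Real.Wallis.W]
  | succ k ih =>
    have h1 : (2 * (k + 1))‼ = (2 * k + 2) * (2 * k)‼ := by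
      rw [show 2 * (k + 1) = 2 * k + 2 by ring, Nat.doubleFactorial_add_two]
    have h2 : (2 * (k + 1) + 1)‼ = (2 * k + 3) * (2 * k + 1)‼ := by
      rw [show 2 * (k + 1) + 1 = (2 * k + 1) + 2 by ring, Nat.doubleFactorial_add_two]
    have h3 : (2 * (k + 1) - 1)‼ = (2 * k + 1)‼ := by
      rw [show 2 * (k + 1) - 1 = 2 * k + 1 from by omega]
    have h4 : ((2 * k + 1)‼ : ℕ) = (2 * k + 1) * (2 * k - 1)‼ := by
      cases k with
      | zero => rfl
      | succ n =>
        rw [show 2 * (n + 1) + 1 = (2 * n + 1) + 2 by ring, Nat.doubleFactorial_add_two,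
          show 2 * (n + 1) - 1 = 2 * n + 1 from by omega]
    rw [Real.Wallis.W_succ, ih, h1, h2, h3, h4]
    have ha : ((2 * k - 1)‼ : ℝ) ≠ 0 := by positivity
    have hb : ((2 * k + 1)‼ : ℝ) ≠ 0 := by positivity
    have hc : (2 * (k : ℝ) + 1) ≠ 0 := by positivity
    have hd : (2 * (k : ℝ) + 3) ≠ 0 := by positivity
    push_cast
    field_simp

lemma one_le_wallis_W (k : ℕ) : 1 ≤ Real.Wallis.W k := by
  induction k with
  | zero => simp [Real.Wallis.W]
  | succ k ih =>
    rw [Real.Wallis.W_succ]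
    have h : (1 : ℝ) ≤ (2 * k + 2) / (2 * k + 1) * ((2 * k + 2) / (2 * k + 3)) := by
      rw [div_mul_div_comm, le_div_iff₀ (by positivity)]
      nlinarith [sq_nonneg ((k : ℝ) + 1)]
    nlinarith

theorem doubleFactorial_ratio_bounds (m : ℕ) (hm : 1 ≤ m) :
    Real.sqrt (2 / (Real.pi * (2 * m + 1))) ≤
      (Nat.doubleFactorial (2 * m - 1) : ℝ) / (Nat.doubleFactorial (2 * m) : ℝ) ∧
    (Nat.doubleFactorial (2 * m - 1) : ℝ) / (Nat.doubleFactorial (2 * m) : ℝ) ≤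
      1 / Real.sqrt (2 * m + 1) := by
  set a : ℝ := ((2 * m - 1)‼ : ℝ) with ha
  set b : ℝ := ((2 * m)‼ : ℝ) with hb
  have hapos : 0 < a := by positivity
  have hbpos : 0 < b := by positivity
  have hc : ((2 * m + 1)‼ : ℝ) = (2 * m + 1) * a := by
    obtain ⟨n, rfl⟩ := Nat.exists_eq_add_of_le hm
    rw [ha, show 2 * (1 + n) + 1 = (2 * n + 1) + 2 by ring, Nat.doubleFactorial_add_two,
      show 2 * (1 + n) - 1 = 2 * n + 1 by omega]
    push_cast
    ring
  have hW := wallis_W_eq_doubleFactorial m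
  rw [hc] at hW
  have hm1 : (0 : ℝ) < 2 * m + 1 := by positivity
  -- upper bound: W m ≥ 1 gives a * ((2m+1) * a) ≤ b ^ 2, so a/b ≤ 1/sqrt(2m+1)
  have h1 : 1 ≤ Real.Wallis.W m := one_le_wallis_W m
  have hub : (a / b) ^ 2 ≤ 1 / (2 * m + 1) := by
    rw [hW, le_div_iff₀ (by positivity)] at h1
    rw [div_pow, div_le_div_iff₀ (by positivity) hm1]
    nlinarith
  -- lower bound: W m ≤ π/2 gives b^2 ≤ (π/2) * a * ((2m+1)*a)
  have h2 : Real.Wallis.W m ≤ Real.pi / 2 := Real.Wallis.W_le m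
  have hlb : 2 / (Real.pi * (2 * m + 1)) ≤ (a / b) ^ 2 := by
    rw [hW, div_le_iff₀ (by positivity)] at h2
    rw [div_pow, div_le_div_iff₀ (by positivity) (by positivity)]
    nlinarith [Real.pi_pos]
  constructor
  · have := Real.sqrt_le_sqrt hlb
    rwa [Real.sqrt_sq (by positivity)] at this
  · have := Real.sqrt_le_sqrt hub
    rw [Real.sqrt_sq (by positivity), one_div, Real.sqrt_inv] at this
    rwa [one_div]
end

section
/- Let n ∈ ℕ and j ∈ {0,…,n} with n + j even. Then the value of the associated Legendre function at zero satisfies P_n^j(0) = (-1)^{(n+j)/2} (n+j-1)!!/(n-j)!!, and P_n^j(0) = 0 if n + j is odd. -/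
open Real

open Polynomial

lemma iteratedDeriv_polyEval (p : ℝ[X]) (k : ℕ) :
    iteratedDeriv k (fun x => p.eval x) = fun x => (derivative^[k] p).eval x := by
  induction k with
  | zero => simp
  | succ k ih =>
    rw [iteratedDeriv_succ, ih, Function.iterate_succ_apply']
    funext x
    exact Polynomial.deriv _

lemma coeff_sq_sub_one_pow (n k : ℕ) :
    (((X : ℝ[X]) ^ 2 - 1) ^ n).coeff k =
      if k % 2 = 0 ∧ k / 2 ≤ n then (-1 : ℝ) ^ (k / 2 + n) * n.choose (k / 2) else 0 := by
  rw [sub_pow, finset_sum_coeff]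
  have h : ∀ m ∈ Finset.range (n + 1),
      ((-1 : ℝ[X]) ^ (m + n) * ((X : ℝ[X]) ^ 2) ^ m * 1 ^ (n - m) *
          (n.choose m : ℝ[X])).coeff k
        = if m = k / 2 ∧ 2 * m = k then (-1 : ℝ) ^ (m + n) * n.choose m else 0 := by
    intro m _
    have he : (-1 : ℝ[X]) ^ (m + n) * ((X : ℝ[X]) ^ 2) ^ m * 1 ^ (n - m) *
          (n.choose m : ℝ[X])
        = C ((-1 : ℝ) ^ (m + n) * n.choose m) * X ^ (2 * m) := by
      simp only [map_mul, map_pow, map_neg, map_one, C_eq_natCast, Nat.cast_pow, pow_mul]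
      ring
    rw [he, coeff_C_mul, coeff_X_pow]
    by_cases h2 : k = 2 * m
    · rw [if_pos h2, if_pos ⟨by omega, by omega⟩, mul_one]
    · rw [if_neg h2, if_neg (by omega), mul_zero]
  rw [Finset.sum_congr rfl h]
  by_cases hk : k % 2 = 0 ∧ k / 2 ≤ n
  · rw [if_pos hk]
    have : ∀ m, (m = k / 2 ∧ 2 * m = k) ↔ m = k / 2 := by
      intro m; constructor
      · exact fun h => h.1
      · rintro rfl; exact ⟨rfl, by omega⟩
    simp only [this]
    rw [Finset.sum_ite_eq' (Finset.range (n + 1)) (k / 2)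
        (fun m => (-1 : ℝ) ^ (m + n) * n.choose m)]
    rw [if_pos (Finset.mem_range.mpr (by omega))]
  · rw [if_neg hk]
    refine Finset.sum_eq_zero fun m hm => ?_
    rw [Finset.mem_range] at hm
    rw [if_neg (by omega)]

lemma fact_two_mul (m : ℕ) : (2 * m).factorial = 2 ^ m * m.factorial * Nat.doubleFactorial (2*m-1) := by
  cases m with
  | zero => decide
  | succ m =>
    have e1 : 2 * (m + 1) = 2 * m + 1 + 1 := by ring
    have e2 : 2 * (m + 1) - 1 = 2 * m + 1 := by omega
    rw [e2, e1, Nat.factorial_eq_mul_doubleFactorial, ← e1,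
      Nat.doubleFactorial_two_mul]

lemma key_nat (n j m : ℕ) (hj : j ≤ n) (hm : n + j = 2 * m) :
    (2 * m).factorial * n.choose m * Nat.doubleFactorial (n-j) = Nat.doubleFactorial (2*m-1) * (2 ^ n * n.factorial) := by
  have hmn : m ≤ n := by omega
  have h1 : n - j = 2 * (n - m) := by omega
  rw [h1, Nat.doubleFactorial_two_mul, fact_two_mul]
  have h2 := Nat.choose_mul_factorial_mul_factorial hmn
  have h3 : 2 ^ m * 2 ^ (n - m) = 2 ^ n := by rw [← pow_add]; congr 1; omega
  rw [← h2, ← h3]; ring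

/-- The associated Legendre function `P_n^j` (with Condon–Shortley phase). -/
noncomputable def assocLegendre (n j : ℕ) : ℝ → ℝ := fun t =>
  ((-1 : ℝ) ^ j / (2 ^ n * Nat.factorial n)) * (1 - t ^ 2) ^ ((j : ℝ) / 2) *
    iteratedDeriv (n + j) (fun s : ℝ => (s ^ 2 - 1) ^ n) t

open Polynomial in
theorem assocLegendre_zero (n j : ℕ) (hj : j ≤ n) :
    (Even (n + j) →
      assocLegendre n j 0 =
        (-1 : ℝ) ^ ((n + j) / 2) *
          (Nat.doubleFactorial (n + j - 1) : ℝ) / (Nat.doubleFactorial (n - j) : ℝ)) ∧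
    (¬ Even (n + j) → assocLegendre n j 0 = 0) := by
  have hiter : iteratedDeriv (n + j) (fun s : ℝ => (s ^ 2 - 1) ^ n) 0 =
      ((n + j).factorial : ℝ) * (((X : ℝ[X]) ^ 2 - 1) ^ n).coeff (n + j) := by
    have hf : (fun s : ℝ => (s ^ 2 - 1) ^ n) =
        fun s => (((X : ℝ[X]) ^ 2 - 1) ^ n).eval s := by
      funext s; simp
    rw [hf, iteratedDeriv_polyEval]
    show Polynomial.eval (0:ℝ) _ = _
    rw [← Polynomial.coeff_zero_eq_eval_zero, coeff_iterate_derivative, zero_add,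
      Nat.descFactorial_self, nsmul_eq_mul]
  have hrpow : ((1 : ℝ) - 0 ^ 2) ^ ((j : ℝ) / 2) = 1 := by norm_num
  constructor
  · intro h
    obtain ⟨m, hm⟩ := h
    have hm2 : n + j = 2 * m := by omega
    have hcoeff : (((X : ℝ[X]) ^ 2 - 1) ^ n).coeff (n + j) =
        (-1 : ℝ) ^ (m + n) * n.choose m := by
      rw [coeff_sq_sub_one_pow, if_pos ⟨by omega, by omega⟩,
        show (n + j) / 2 = m from by omega]
    have hD : ((2 : ℝ) ^ n * n.factorial) ≠ 0 := by positivity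
    have hB : ((Nat.doubleFactorial (n - j) : ℝ)) ≠ 0 := by positivity
    have keyR : ((n + j).factorial : ℝ) * n.choose m * Nat.doubleFactorial (n - j) =
        (Nat.doubleFactorial (n + j - 1) : ℝ) * (2 ^ n * n.factorial) := by
      rw [hm2]
      exact_mod_cast key_nat n j m hj hm2
    have hsign : (-1 : ℝ) ^ j * (-1 : ℝ) ^ (m + n) = (-1 : ℝ) ^ m := by
      rw [← pow_add, show j + (m + n) = m + 2 * m from by omega, pow_add]
      simp [pow_mul]
    show ((-1 : ℝ) ^ j / (2 ^ n * Nat.factorial n)) * (1 - (0:ℝ) ^ 2) ^ ((j : ℝ) / 2) *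
        iteratedDeriv (n + j) (fun s : ℝ => (s ^ 2 - 1) ^ n) 0 = _
    rw [hrpow, mul_one, hiter, hcoeff]
    calc ((-1 : ℝ) ^ j / (2 ^ n * Nat.factorial n)) *
          (((n + j).factorial : ℝ) * ((-1 : ℝ) ^ (m + n) * n.choose m))
        = ((-1 : ℝ) ^ j * (-1 : ℝ) ^ (m + n)) *
            (((n + j).factorial : ℝ) * n.choose m / (2 ^ n * Nat.factorial n)) := by ring
      _ = (-1 : ℝ) ^ m *
            ((Nat.doubleFactorial (n + j - 1) : ℝ) / (Nat.doubleFactorial (n - j) : ℝ)) := by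
          rw [hsign]
          congr 1
          rw [div_eq_div_iff hD hB]
          linear_combination keyR
      _ = (-1 : ℝ) ^ ((n + j) / 2) * (Nat.doubleFactorial (n + j - 1) : ℝ) /
            (Nat.doubleFactorial (n - j) : ℝ) := by
          rw [show (n + j) / 2 = m from by omega]; ring
  · intro h
    have hodd : (n + j) % 2 = 1 := by
      rcases Nat.even_or_odd (n + j) with he | ho
      · exact absurd he h
      · exact Nat.odd_iff.mp ho
    show ((-1 : ℝ) ^ j / (2 ^ n * Nat.factorial n)) * (1 - (0:ℝ) ^ 2) ^ ((j : ℝ) / 2) *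
        iteratedDeriv (n + j) (fun s : ℝ => (s ^ 2 - 1) ^ n) 0 = 0
    rw [hiter, coeff_sq_sub_one_pow, if_neg (by omega)]
    ring
end

section
/- For m ∈ ℕ, the sum satisfies 2 ∑_{j=1}^{m} 1/((2j)² sqrt((2m+1)² - (2j)²)) ≤ 2 sqrt(m² + m)/(2m+1)², which is at most 1/(2m+1). -/
open Real Finset

private lemma poly_aux (c D : ℝ) (hc : 2 ≤ c) (hD : 0 ≤ D) :
    (D - 1) * (c ^ 2 + 1) * (c ^ 2 - 1) ^ 2 ≤ c ^ 6 * D := by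
  have h4 : (0:ℝ) ≤ c ^ 4 + c ^ 2 - 1 := by nlinarith
  have h6 : (0:ℝ) ≤ c ^ 6 - c ^ 4 - c ^ 2 + 1 := by
    nlinarith [mul_nonneg (sq_nonneg (c ^ 2 - 1)) (show (0:ℝ) ≤ c ^ 2 + 1 by positivity)]
  nlinarith [mul_nonneg hD h4]

private lemma key_step (N c : ℝ) (hc : 2 ≤ c) (hcN : c + 1 ≤ N) :
    1 / (c ^ 2 * Real.sqrt (N ^ 2 - c ^ 2)) ≤
      (Real.sqrt (N ^ 2 - (c - 1) ^ 2) / (c - 1) -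
        Real.sqrt (N ^ 2 - (c + 1) ^ 2) / (c + 1)) / (2 * N ^ 2) := by
  have hN : 3 ≤ N := by linarith
  set u := Real.sqrt (N ^ 2 - (c - 1) ^ 2) with hu
  set v := Real.sqrt (N ^ 2 - (c + 1) ^ 2) with hv
  set w := Real.sqrt (N ^ 2 - c ^ 2) with hw
  have hvnn : 0 ≤ N ^ 2 - (c + 1) ^ 2 := by nlinarith
  have hwnn : 0 < N ^ 2 - c ^ 2 := by nlinarith
  have hunn : 0 < N ^ 2 - (c - 1) ^ 2 := by nlinarith
  have hu2 : u ^ 2 = N ^ 2 - (c - 1) ^ 2 := Real.sq_sqrt (le_of_lt hunn)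
  have hv2 : v ^ 2 = N ^ 2 - (c + 1) ^ 2 := Real.sq_sqrt hvnn
  have hw2 : w ^ 2 = N ^ 2 - c ^ 2 := Real.sq_sqrt (le_of_lt hwnn)
  have hu0 : 0 < u := Real.sqrt_pos.mpr hunn
  have hv0 : 0 ≤ v := Real.sqrt_nonneg _
  have hw0 : 0 < w := Real.sqrt_pos.mpr hwnn
  -- the "Cauchy-Schwarz" auxiliary sqrt
  have hSnn : (0:ℝ) ≤ (N ^ 2 - c ^ 2 - 1) * (c ^ 2 + 1) := by nlinarith
  set S := Real.sqrt ((N ^ 2 - c ^ 2 - 1) * (c ^ 2 + 1)) with hS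
  have hS2 : S ^ 2 = (N ^ 2 - c ^ 2 - 1) * (c ^ 2 + 1) := Real.sq_sqrt hSnn
  have hS0 : 0 ≤ S := Real.sqrt_nonneg _
  set P := u * (c + 1) + v * (c - 1) with hPdef
  have hP : 0 < P := by
    have : 0 ≤ v * (c - 1) := mul_nonneg hv0 (by linarith)
    have : 0 < u * (c + 1) := by positivity
    unfold P; linarith
  -- Step A : P ≤ 2 S
  have hc1 : (0:ℝ) ≤ c ^ 2 - 1 := by nlinarith
  have hA : P ≤ 2 * S := by
    have e : (2 * S) ^ 2 - P ^ 2 = (u * (c - 1) - v * (c + 1)) ^ 2 := by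
      unfold P
      linear_combination 4 * hS2 - (2 * c ^ 2 + 2) * hu2 - (2 * c ^ 2 + 2) * hv2
    have hsq : P ^ 2 ≤ (2 * S) ^ 2 := by
      linarith [sq_nonneg (u * (c - 1) - v * (c + 1)), e]
    have := Real.sqrt_le_sqrt hsq
    rwa [Real.sqrt_sq hP.le, Real.sqrt_sq (by positivity)] at this
  -- Step B : 2 S (c²-1) ≤ 2 c³ w
  have hB : 2 * S * (c ^ 2 - 1) ≤ 2 * c ^ 3 * w := by
    have hpoly : (N ^ 2 - c ^ 2 - 1) * (c ^ 2 + 1) * (c ^ 2 - 1) ^ 2 ≤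
        c ^ 6 * (N ^ 2 - c ^ 2) := poly_aux c (N ^ 2 - c ^ 2) hc hwnn.le
    have e1 : (2 * S * (c ^ 2 - 1)) ^ 2 = 4 * ((N ^ 2 - c ^ 2 - 1) * (c ^ 2 + 1) * (c ^ 2 - 1) ^ 2) := by
      linear_combination 4 * (c ^ 2 - 1) ^ 2 * hS2
    have e2 : (2 * c ^ 3 * w) ^ 2 = 4 * (c ^ 6 * (N ^ 2 - c ^ 2)) := by
      linear_combination 4 * c ^ 6 * hw2
    have hsq : (2 * S * (c ^ 2 - 1)) ^ 2 ≤ (2 * c ^ 3 * w) ^ 2 := by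
      rw [e1, e2]; linarith
    have := Real.sqrt_le_sqrt hsq
    rwa [Real.sqrt_sq (mul_nonneg (by positivity : (0:ℝ) ≤ 2 * S) hc1),
      Real.sqrt_sq (by positivity)] at this
  -- chain : (c²-1) P ≤ 2 c³ w
  have hchain : (c ^ 2 - 1) * P ≤ 2 * c ^ 3 * w := by
    have h1 : (c ^ 2 - 1) * P ≤ (c ^ 2 - 1) * (2 * S) :=
      mul_le_mul_of_nonneg_left hA hc1
    linarith [hB, h1]
  -- the difference identity
  have hdiff : (u * (c + 1) - v * (c - 1)) * P = 4 * c * N ^ 2 := by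
    unfold P
    linear_combination (c + 1) ^ 2 * hu2 - (c - 1) ^ 2 * hv2
  -- main inequality
  have main : 2 * N ^ 2 * ((c - 1) * (c + 1)) ≤ (u * (c + 1) - v * (c - 1)) * (c ^ 2 * w) := by
    have h1 : 2 * N ^ 2 * ((c - 1) * (c + 1)) * P ≤
        (u * (c + 1) - v * (c - 1)) * (c ^ 2 * w) * P := by
      have h2 : (u * (c + 1) - v * (c - 1)) * (c ^ 2 * w) * P = 4 * c ^ 3 * N ^ 2 * w := by
        linear_combination c ^ 2 * w * hdiff
      rw [h2]
      have := mul_le_mul_of_nonneg_left hchain (by positivity : (0:ℝ) ≤ 2 * N ^ 2)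
      linarith [this]
    exact le_of_mul_le_mul_right h1 hP
  -- conclude
  have ha : (0:ℝ) < c - 1 := by linarith
  have hb : (0:ℝ) < c + 1 := by linarith
  have hexp : u / (c - 1) - v / (c + 1) = (u * (c + 1) - v * (c - 1)) / ((c - 1) * (c + 1)) := by
    field_simp
  rw [hexp, div_div, div_le_div_iff₀ (by positivity) (by positivity)]
  calc 1 * ((c - 1) * (c + 1) * (2 * N ^ 2)) = 2 * N ^ 2 * ((c - 1) * (c + 1)) := by ring
    _ ≤ (u * (c + 1) - v * (c - 1)) * (c ^ 2 * w) := main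
    _ = (u * (c + 1) - v * (c - 1)) * (c ^ 2 * w) := rfl

theorem even_sum_estimate (m : ℕ) :
    2 * ∑ j ∈ Finset.Icc 1 m,
        1 / ((2 * (j : ℝ)) ^ 2 * Real.sqrt ((2 * (m : ℝ) + 1) ^ 2 - (2 * (j : ℝ)) ^ 2)) ≤
      2 * Real.sqrt ((m : ℝ) ^ 2 + m) / (2 * (m : ℝ) + 1) ^ 2 ∧
    2 * Real.sqrt ((m : ℝ) ^ 2 + m) / (2 * (m : ℝ) + 1) ^ 2 ≤ 1 / (2 * (m : ℝ) + 1) := by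
  set x : ℝ := (m : ℝ) with hx
  have hx0 : 0 ≤ x := Nat.cast_nonneg m
  set N : ℝ := 2 * x + 1 with hN
  have hN0 : 0 < N := by positivity
  constructor
  · -- the sum bound
    set f : ℕ → ℝ := fun i => Real.sqrt (N ^ 2 - (2 * (i : ℝ) + 1) ^ 2) / (2 * (i : ℝ) + 1)
      with hf
    have hterm : ∀ i ∈ Finset.range m,
        1 / ((2 * ((1 + i : ℕ) : ℝ)) ^ 2 *
          Real.sqrt (N ^ 2 - (2 * ((1 + i : ℕ) : ℝ)) ^ 2)) ≤
        (f i - f (i + 1)) / (2 * N ^ 2) := by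
      intro i hi
      have him : (i : ℝ) + 1 ≤ x := by
        have := Finset.mem_range.mp hi
        have : (i : ℝ) + 1 ≤ (m : ℝ) := by exact_mod_cast this
        simpa [hx] using this
      have := key_step N (2 * ((i : ℝ) + 1)) (by linarith) (by simp only [hN]; linarith)
      rw [show 2 * ((i : ℝ) + 1) - 1 = 2 * (i : ℝ) + 1 by ring] at this
      simp only [hf]
      push_cast
      ring_nf at this ⊢
      exact this
    have hsum : ∑ j ∈ Finset.Icc 1 m,
        1 / ((2 * (j : ℝ)) ^ 2 * Real.sqrt (N ^ 2 - (2 * (j : ℝ)) ^ 2)) ≤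
        (f 0 - f m) / (2 * N ^ 2) := by
      rw [show Finset.Icc 1 m = Finset.Ico 1 (m + 1) from (Finset.Ico_add_one_right_eq_Icc 1 m).symm,
        Finset.sum_Ico_eq_sum_range]
      simp only [Nat.add_sub_cancel]
      calc ∑ i ∈ Finset.range m,
            1 / ((2 * ((1 + i : ℕ) : ℝ)) ^ 2 *
              Real.sqrt (N ^ 2 - (2 * ((1 + i : ℕ) : ℝ)) ^ 2))
          ≤ ∑ i ∈ Finset.range m, (f i - f (i + 1)) / (2 * N ^ 2) :=
            Finset.sum_le_sum hterm
        _ = (∑ i ∈ Finset.range m, (f i - f (i + 1))) / (2 * N ^ 2) := by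
            rw [Finset.sum_div]
        _ = (f 0 - f m) / (2 * N ^ 2) := by rw [Finset.sum_range_sub']
    have hf0 : f 0 = 2 * Real.sqrt (x ^ 2 + x) := by
      simp only [hf, Nat.cast_zero]
      rw [show N ^ 2 - (2 * (0:ℝ) + 1) ^ 2 = 4 * (x ^ 2 + x) by rw [hN]; ring]
      rw [show (4:ℝ) * (x ^ 2 + x) = 2 ^ 2 * (x ^ 2 + x) by norm_num,
        Real.sqrt_mul (by positivity), Real.sqrt_sq (by norm_num)]
      norm_num
    have hfm : f m = 0 := by
      simp only [hf, ← hx]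
      rw [show N ^ 2 - (2 * x + 1) ^ 2 = 0 by rw [hN]; ring, Real.sqrt_zero, zero_div]
    rw [hf0, hfm] at hsum
    have heq : 2 * ((2 * Real.sqrt (x ^ 2 + x) - 0) / (2 * N ^ 2)) =
        2 * Real.sqrt (x ^ 2 + x) / N ^ 2 := by
      field_simp
      ring
    linarith [hsum, heq.symm.le, heq.le]
  · -- the easy bound
    have hs : Real.sqrt (x ^ 2 + x) ≤ (2 * x + 1) / 2 := by
      have : Real.sqrt (x ^ 2 + x) ≤ Real.sqrt (((2 * x + 1) / 2) ^ 2) :=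
        Real.sqrt_le_sqrt (by nlinarith)
      rwa [Real.sqrt_sq (by positivity)] at this
    rw [div_le_div_iff₀ (by positivity) (by positivity)]
    nlinarith [hs, hN0]
end

section
/- For m ∈ ℕ with m ≥ 1, the sum ∑_{j=1}^{m} 1/((2j-1)² sqrt((2m)² - (2j-1)²)) is bounded above by 1/sqrt((2m)²-1) + sqrt((2m)²-1)/(2(2m)²), which is at most (1/(2m))(2/√3 + 1/2). -/
set_option maxHeartbeats 1000000

open Real Finset

lemma polyQ (x u q : ℝ) (hx : 3 ≤ x) (hu : 2*x+1 ≤ u) (hq : 0 ≤ q)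
    (hq2 : q^2 = u*(u-(2*x+1))) :
    (x^2-1)*(x-1)*q ≤ u*(x^3-x^2+x+1) - (x+1)^2*(x-1)*(x-1/2) := by
  have hA : (0:ℝ) ≤ x^3-x^2+x+1 := by nlinarith
  have hR : 0 ≤ u*(x^3-x^2+x+1) - (x+1)^2*(x-1)*(x-1/2) := by
    nlinarith [mul_nonneg (sub_nonneg.2 hu) hA]
  have ha : (0:ℝ) < 4*x*(x^3-x^2+1) := by nlinarith
  have h1 : (0:ℝ) ≤ 3*x^5-8*x^4+5*x^3+3*x^2-4*x+1 := by
    nlinarith [pow_pos (show (0:ℝ) < x by linarith) 4, sq_nonneg x]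
  have h1' : (0:ℝ) ≤ 4*x*(x+1)^4*(x-1)^2*(3*x^5-8*x^4+5*x^3+3*x^2-4*x+1) := by
    have : (0:ℝ) ≤ 4*x*(x+1)^4*(x-1)^2 := by positivity
    exact mul_nonneg this h1
  have hD : 0 ≤ (4*x*(x^3-x^2+1))*u^2 - (2*x^3*(x+1)^2*(x-1))*u + (x+1)^4*(x-1)^2*(x-1/2)^2 := by
    have h4 : 0 ≤ (4*(4*x*(x^3-x^2+1))) * ((4*x*(x^3-x^2+1))*u^2 - (2*x^3*(x+1)^2*(x-1))*u + (x+1)^4*(x-1)^2*(x-1/2)^2) := by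
      nlinarith [sq_nonneg (2*(4*x*(x^3-x^2+1))*u - 2*x^3*(x+1)^2*(x-1)), h1']
    nlinarith [h4, ha]
  have hL : 0 ≤ (x^2-1)*(x-1)*q := by
    have : (0:ℝ) ≤ (x^2-1)*(x-1) := by nlinarith
    exact mul_nonneg this hq
  have hq2' : ((x^2-1)*(x-1)*q)^2 = ((x^2-1)*(x-1))^2 * (u*(u-(2*x+1))) := by
    rw [mul_pow, hq2]
  have hsq : ((x^2-1)*(x-1)*q)^2 ≤ (u*(x^3-x^2+x+1) - (x+1)^2*(x-1)*(x-1/2))^2 := by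
    rw [hq2']; nlinarith [hD]
  exact (pow_le_pow_iff_left₀ hL hR two_ne_zero).mp hsq

lemma polyP (x u p : ℝ) (hx : 3 ≤ x) (hu : 2*x+1 ≤ u) (hp : 0 ≤ p)
    (hp2 : p^2 = u*(u+(2*x-1))) : p ≤ u + x - 1/2 := by
  have hc : (0:ℝ) ≤ u + x - 1/2 := by linarith
  have : p^2 ≤ (u + x - 1/2)^2 := by nlinarith
  exact (pow_le_pow_iff_left₀ hp hc two_ne_zero).mp this

lemma claim (x u p q : ℝ) (hx : 3 ≤ x) (hu : 2*x+1 ≤ u) (hp : 0 ≤ p) (hq : 0 ≤ q)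
    (hp2 : p^2 = u*(u+(2*x-1))) (hq2 : q^2 = u*(u-(2*x+1))) :
    (x^2-1)*((x+1)*p + (x-1)*q) ≤ 2*x^3*u := by
  have h1 := polyP x u p hx hu hp hp2
  have h2 := polyQ x u q hx hu hq hq2
  have hx1 : (0:ℝ) ≤ (x^2-1)*(x+1) := by nlinarith
  linarith [mul_le_mul_of_nonneg_left h1 hx1]

lemma key (M x : ℝ) (hx : 3 ≤ x) (hxM : x + 1 ≤ M) :
    1/(x^2 * Real.sqrt (M^2 - x^2)) ≤
      Real.sqrt (M^2-(x-1)^2)/((x-1)*(2*M^2)) - Real.sqrt (M^2-(x+1)^2)/((x+1)*(2*M^2)) := by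
  have hM : (4:ℝ) ≤ M := by linarith
  obtain ⟨u, hudef⟩ : ∃ u : ℝ, u = M^2 - x^2 := ⟨_, rfl⟩
  have hu : 2*x+1 ≤ u := by rw [hudef]; nlinarith
  have hu0 : 0 < u := by linarith
  have h0 : M^2 - x^2 = u := hudef.symm
  have h1 : M^2 - (x-1)^2 = u + (2*x-1) := by rw [hudef]; ring
  have h2 : M^2 - (x+1)^2 = u - (2*x+1) := by rw [hudef]; ring
  rw [h0, h1, h2]
  set s0 := Real.sqrt u with hs0def
  set s1 := Real.sqrt (u + (2*x-1)) with hs1def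
  set s2 := Real.sqrt (u - (2*x+1)) with hs2def
  have hs0 : 0 < s0 := Real.sqrt_pos.mpr hu0
  have hs1 : 0 < s1 := Real.sqrt_pos.mpr (by linarith)
  have hs2 : 0 ≤ s2 := Real.sqrt_nonneg _
  have e0 : s0^2 = u := Real.sq_sqrt hu0.le
  have e1 : s1^2 = u + (2*x-1) := Real.sq_sqrt (by linarith)
  have e2 : s2^2 = u - (2*x+1) := Real.sq_sqrt (by linarith)
  have hp : 0 ≤ s0*s1 := mul_nonneg hs0.le hs1.le
  have hq : 0 ≤ s0*s2 := mul_nonneg hs0.le hs2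
  have hp2 : (s0*s1)^2 = u*(u+(2*x-1)) := by rw [mul_pow, e0, e1]
  have hq2 : (s0*s2)^2 = u*(u-(2*x+1)) := by rw [mul_pow, e0, e2]
  have hcl := claim x u (s0*s1) (s0*s2) hx hu hp hq hp2 hq2
  have hid : ((x+1)*(s0*s1) - (x-1)*(s0*s2)) * ((x+1)*(s0*s1) + (x-1)*(s0*s2))
      = 4*x*u*(u+x^2) := by nlinarith [hp2, hq2]
  have hS : 0 < (x+1)*(s0*s1) + (x-1)*(s0*s2) := by
    have h3 : 0 < (x+1)*(s0*s1) := mul_pos (by linarith) (mul_pos hs0 hs1)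
    have h4 : 0 ≤ (x-1)*(s0*s2) := mul_nonneg (by linarith) hq
    linarith
  have hux : (0:ℝ) < u + x^2 := by nlinarith
  have hmain : 2*(u+x^2)*(x^2-1) ≤ x^2 * ((x+1)*(s0*s1) - (x-1)*(s0*s2)) := by
    have h5 : 2*(u+x^2)*(x^2-1) * ((x+1)*(s0*s1) + (x-1)*(s0*s2))
        ≤ x^2 * ((x+1)*(s0*s1) - (x-1)*(s0*s2)) * ((x+1)*(s0*s1) + (x-1)*(s0*s2)) := by
      have hr : x^2 * ((x+1)*(s0*s1) - (x-1)*(s0*s2)) * ((x+1)*(s0*s1) + (x-1)*(s0*s2))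
          = x^2 * (4*x*u*(u+x^2)) := by rw [mul_assoc, hid]
      rw [hr]
      linarith [mul_le_mul_of_nonneg_left hcl (le_of_lt (by linarith : (0:ℝ) < 2*(u+x^2)))]
    exact le_of_mul_le_mul_right h5 hS
  have hd1 : (0:ℝ) < (x-1)*(2*M^2) := by nlinarith
  have hd2 : (0:ℝ) < (x+1)*(2*M^2) := by nlinarith
  have hd0 : (0:ℝ) < x^2 * s0 := by nlinarith
  rw [div_sub_div _ _ hd1.ne' hd2.ne', div_le_div_iff₀ hd0 (mul_pos hd1 hd2)]
  have hM2 : M^2 = u + x^2 := by rw [hudef]; ring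
  rw [hM2]
  linarith [mul_le_mul_of_nonneg_left hmain (le_of_lt (by linarith : (0:ℝ) < 2*(u+x^2)))]


theorem odd_sum_estimate (m : ℕ) (hm : 1 ≤ m) :
    (∑ j ∈ Finset.Icc 1 m,
        1 / ((2 * (j : ℝ) - 1) ^ 2 *
          Real.sqrt ((2 * (m : ℝ)) ^ 2 - (2 * (j : ℝ) - 1) ^ 2)) ≤
      1 / Real.sqrt ((2 * (m : ℝ)) ^ 2 - 1) +
        Real.sqrt ((2 * (m : ℝ)) ^ 2 - 1) / (2 * (2 * (m : ℝ)) ^ 2)) ∧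
    1 / Real.sqrt ((2 * (m : ℝ)) ^ 2 - 1) +
        Real.sqrt ((2 * (m : ℝ)) ^ 2 - 1) / (2 * (2 * (m : ℝ)) ^ 2) ≤
      1 / (2 * (m : ℝ)) * (2 / Real.sqrt 3 + 1 / 2) := by
  have hm1 : (1:ℝ) ≤ (m:ℝ) := by exact_mod_cast hm
  set M : ℝ := 2 * (m:ℝ) with hMdef
  have hM2 : (2:ℝ) ≤ M := by rw [hMdef]; linarith
  have hM0 : (0:ℝ) < M := by linarith
  have hM21 : (3:ℝ) ≤ M^2 - 1 := by nlinarith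
  have ht : 0 < Real.sqrt (M^2 - 1) := Real.sqrt_pos.mpr (by linarith)
  have ht2 : (Real.sqrt (M^2-1))^2 = M^2 - 1 := Real.sq_sqrt (by linarith)
  constructor
  · -- part 1
    set F : ℕ → ℝ := fun k => Real.sqrt (M^2 - (2*(k:ℝ)+2)^2) / ((2*(k:ℝ)+2)*(2*M^2)) with hF
    have hFnonneg : ∀ k, 0 ≤ F k := by
      intro k
      apply div_nonneg (Real.sqrt_nonneg _)
      positivity
    have hsum : ∑ j ∈ Finset.Icc 1 m,
        1 / ((2 * (j : ℝ) - 1) ^ 2 * Real.sqrt (M ^ 2 - (2 * (j : ℝ) - 1) ^ 2))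
        = ∑ i ∈ Finset.range m,
        1 / ((2 * ((1+i : ℕ) : ℝ) - 1) ^ 2 * Real.sqrt (M ^ 2 - (2 * ((1+i : ℕ) : ℝ) - 1) ^ 2)) := by
      rw [← Finset.Ico_add_one_right_eq_Icc, Finset.sum_Ico_eq_sum_range]
      simp
    rw [hsum]
    obtain ⟨n, hn⟩ : ∃ n, m = n + 1 := ⟨m - 1, (Nat.succ_pred_eq_of_pos hm).symm⟩
    rw [hn, Finset.sum_range_succ']
    have hfirst : 1 / ((2 * (((1:ℕ)+(0:ℕ) : ℕ) : ℝ) - 1) ^ 2 *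
        Real.sqrt (M ^ 2 - (2 * (((1:ℕ)+(0:ℕ) : ℕ) : ℝ) - 1) ^ 2)) = 1 / Real.sqrt (M^2 - 1) := by
      norm_num
    rw [hfirst]
    have hstep : ∑ i ∈ Finset.range n,
        1 / ((2 * ((1+(i+1) : ℕ) : ℝ) - 1) ^ 2 * Real.sqrt (M ^ 2 - (2 * ((1+(i+1) : ℕ) : ℝ) - 1) ^ 2))
        ≤ ∑ i ∈ Finset.range n, (F i - F (i+1)) := by
      apply Finset.sum_le_sum
      intro i hi
      have hi' : i + 1 ≤ n := Nat.succ_le_of_lt (Finset.mem_range.mp hi)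
      have hcast : ((1+(i+1) : ℕ) : ℝ) = (i:ℝ) + 2 := by push_cast; ring
      rw [hcast]
      have hx : (3:ℝ) ≤ 2 * ((i:ℝ)+2) - 1 := by
        have : (0:ℝ) ≤ (i:ℝ) := Nat.cast_nonneg i
        linarith
      have hxM : (2 * ((i:ℝ)+2) - 1) + 1 ≤ M := by
        rw [hMdef, hn]
        have : (i:ℝ) + 1 ≤ (n:ℝ) := by exact_mod_cast hi'
        push_cast
        linarith
      have hk := key M (2 * ((i:ℝ)+2) - 1) hx hxM
      have hE1 : M^2 - (2 * ((i:ℝ)+2) - 1 - 1)^2 = M^2 - (2*(i:ℝ)+2)^2 := by ring_nf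
      have hE2 : M^2 - (2 * ((i:ℝ)+2) - 1 + 1)^2 = M^2 - (2*((i:ℝ)+1)+2)^2 := by ring_nf
      have hd1 : (2 * ((i:ℝ)+2) - 1 - 1) * (2*M^2) = (2*(i:ℝ)+2)*(2*M^2) := by ring
      have hd2 : (2 * ((i:ℝ)+2) - 1 + 1) * (2*M^2) = (2*((i:ℝ)+1)+2)*(2*M^2) := by ring
      rw [hE1, hE2, hd1, hd2] at hk
      have hFi : F i = Real.sqrt (M^2 - (2*(i:ℝ)+2)^2) / ((2*(i:ℝ)+2)*(2*M^2)) := rfl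
      have hFi1 : F (i+1) = Real.sqrt (M^2 - (2*((i:ℝ)+1)+2)^2) / ((2*((i:ℝ)+1)+2)*(2*M^2)) := by
        rw [hF]; push_cast; ring_nf
      rw [hFi, hFi1]
      exact hk
    have htel : ∑ i ∈ Finset.range n, (F i - F (i+1)) = F 0 - F n := Finset.sum_range_sub' F n
    have hF0 : F 0 ≤ Real.sqrt (M^2-1) / (2*M^2) := by
      have h1 : F 0 = Real.sqrt (M^2 - 4) / (2*(2*M^2)) := by
        rw [hF]; norm_num
      rw [h1]
      have h2 : Real.sqrt (M^2-4) ≤ Real.sqrt (M^2-1) := Real.sqrt_le_sqrt (by linarith)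
      rw [div_le_div_iff₀ (by positivity) (by positivity)]
      nlinarith [Real.sqrt_nonneg (M^2-4), ht.le, mul_le_mul_of_nonneg_right h2 (show (0:ℝ) ≤ 2*M^2 by positivity)]
    linarith [hstep, htel, hFnonneg n, hF0]
  · -- part 2
    have hs3 : (0:ℝ) < Real.sqrt 3 := Real.sqrt_pos.mpr (by norm_num)
    have hs32 : (Real.sqrt 3)^2 = 3 := Real.sq_sqrt (by norm_num)
    have ha : 1 / Real.sqrt (M^2-1) ≤ 2 / (Real.sqrt 3 * M) := by
      rw [div_le_div_iff₀ ht (by positivity)]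
      nlinarith [ht2, hs32, sq_nonneg (Real.sqrt 3 * M - 2 * Real.sqrt (M^2-1))]
    have htM : Real.sqrt (M^2-1) ≤ M := by
      have := Real.sqrt_le_sqrt (show M^2 - 1 ≤ M^2 by linarith)
      calc Real.sqrt (M^2-1) ≤ Real.sqrt (M^2) := this
        _ = M := Real.sqrt_sq hM0.le
    have hb : Real.sqrt (M^2-1) / (2*M^2) ≤ 1/(2*M) := by
      rw [div_le_div_iff₀ (by positivity) (by positivity)]
      nlinarith
    have hc : 2 / (Real.sqrt 3 * M) + 1/(2*M) = 1/M * (2/Real.sqrt 3 + 1/2) := by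
      field_simp
    linarith
end
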